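/- Let G be a finite group and π a set of primes such that O_π(G) = 1. Then O_π(G/Φ(G)) = 1. -/

import Mathlib

open Subgroup MulAction Pointwise

universe u

section FrattiniPiCore


variable {G : Type*} [Group G]

lemma coprime_of_no_common_prime {a b : ℕ}
    (h : ∀ p : ℕ, p.Prime → p ∣ a → ¬ p ∣ b) : Nat.Coprime a b := by
  by_contra hc
  obtain ⟨p, hp, hpd⟩ := Nat.exists_prime_and_dvd hc
  exact h p hp (hpd.trans (Nat.gcd_dvd_left a b)) (hpd.trans (Nat.gcd_dvd_right a b))

lemma charNormal (N : Subgroup G) [hN : N.Normal] (H : Subgroup N) [hH : H.Characteristic] :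
    (H.map N.subtype).Normal := by
  constructor
  intro x hx g
  obtain ⟨y, hy, rfl⟩ := hx
  let e : N ≃* N :=
  { toFun := fun n => ⟨g * n * g⁻¹, hN.conj_mem n n.2 g⟩
    invFun := fun n => ⟨g⁻¹ * n * g, by simpa using hN.conj_mem n n.2 g⁻¹⟩
    left_inv := fun n => by ext; simp [mul_assoc]
    right_inv := fun n => by ext; simp [mul_assoc]
    map_mul' := fun a b => by ext; simp }
  have hmem : e y ∈ H := by
    rw [← Subgroup.characteristic_iff_map_eq.mp hH e]
    exact ⟨y, hy, rfl⟩
  exact ⟨e y, hmem, rfl⟩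

noncomputable def mkQD (H : Subgroup G) [IsMulCommutative H] [H.FiniteIndex]
    (T : H.LeftTransversal) : H.QuotientDiff := Quotient.mk'' T

lemma sz_conj [Finite G] (H : Subgroup G) [H.Normal] [IsMulCommutative H]
    {K₁ K₂ : Subgroup G} (h1 : IsComplement' H K₁) (h2 : IsComplement' H K₂)
    (hco : Nat.Coprime (Nat.card H) H.index) :
    ∃ h ∈ H, K₂ = K₁.map (MulAut.conj h).toMonoidHom := by
  have key : ∀ (K : Subgroup G) (hK : IsComplement' H K),
      K = stabilizer G (mkQD H ⟨(K : Set G), hK.symm⟩) := by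
    intro K hK
    set a : H.QuotientDiff := Quotient.mk'' ⟨(K : Set G), hK.symm⟩ with ha
    have hle : K ≤ stabilizer G a := by
      intro k hk
      rw [MulAction.mem_stabilizer_iff]
      show Quotient.map' _ _ (Quotient.mk'' _) = Quotient.mk'' _
      rw [Quotient.map'_mk'']
      apply congrArg
      apply Subtype.ext
      show (MulOpposite.op k⁻¹) • (K : Set G) = K
      ext x
      simp only [Set.mem_smul_set]
      constructor
      · rintro ⟨y, hy, rfl⟩
        simpa [MulOpposite.smul_eq_mul_unop] using mul_mem hy (inv_mem hk)
      · intro hx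
        exact ⟨x * k, mul_mem hx hk, by simp [MulOpposite.smul_eq_mul_unop]⟩
    have hcomp := Subgroup.isComplement'_stabilizer_of_coprime (α := a) hco
    have hcard : Nat.card (stabilizer G a) ≤ Nat.card K := by
      have e1 := hK.card_mul
      have e2 := hcomp.card_mul
      have hpos : 0 < Nat.card H := Nat.card_pos
      exact le_of_eq (Nat.eq_of_mul_eq_mul_left hpos (e2.trans e1.symm))
    exact Subgroup.eq_of_le_of_card_ge hle hcard
  obtain ⟨h, hh⟩ := Subgroup.exists_smul_eq hco
    (mkQD H ⟨(K₁ : Set G), h1.symm⟩) (mkQD H ⟨(K₂ : Set G), h2.symm⟩)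
  refine ⟨(h : G), h.2, ?_⟩
  have hh' : ((h : G)) • (mkQD H ⟨(K₁ : Set G), h1.symm⟩ : H.QuotientDiff)
      = mkQD H ⟨(K₂ : Set G), h2.symm⟩ := hh
  rw [key K₂ h2, key K₁ h1, ← hh', MulAction.stabilizer_smul_eq_stabilizer_map_conj]


lemma lemmaB [Finite G] (π : Set ℕ)
    (h : ∀ H : Subgroup G, H.Normal → (∀ p, p.Prime → p ∣ Nat.card H → p ∈ π) → H = ⊥)
    (Z : Subgroup G) [Z.Normal] (hZcomm : IsMulCommutative Z)
    (hZle : Z ≤ frattini G)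
    (hZpi : ∀ p : ℕ, p.Prime → p ∣ Nat.card Z → p ∉ π) :
    ∀ M' : Subgroup (G ⧸ Z), M'.Normal →
      (∀ p, p.Prime → p ∣ Nat.card M' → p ∈ π) → M' = ⊥ := by
  intro M' hM' hMpi
  haveI := hZcomm
  set f := QuotientGroup.mk' Z with hf
  have hfsurj : Function.Surjective f := QuotientGroup.mk'_surjective Z
  set M := M'.comap f with hM
  haveI hMnormal : M.Normal := hM'.comap f
  have hZM : Z ≤ M := by
    intro z hz
    have : f z = 1 := (QuotientGroup.eq_one_iff z).mpr hz
    simp only [hM, Subgroup.mem_comap, this]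
    exact M'.one_mem
  set Z' := Z.subgroupOf M with hZ'
  haveI : Z'.Normal := Subgroup.normal_subgroupOf
  -- cardinalities
  have e1 : Nat.card Z' = Nat.card Z :=
    Nat.card_congr (Subgroup.subgroupOfEquivOfLe hZM).toEquiv
  have hker : (f.domRestrict M).ker = Z' := by
    rw [MonoidHom.ker_domRestrict, hZ']
    congr 1
    exact QuotientGroup.ker_mk' Z
  have hrange : (f.domRestrict M).range = M' := by
    rw [MonoidHom.domRestrict_range]
    exact Subgroup.map_comap_eq_self_of_surjective hfsurj M'
  have e2 : Z'.index = Nat.card M' := by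
    have := Nat.card_congr (QuotientGroup.quotientKerEquivRange (f.domRestrict M)).toEquiv
    rw [hker, hrange] at this
    rw [Subgroup.index_eq_card, this]
  have hcop : Nat.Coprime (Nat.card Z') Z'.index := by
    rw [e1, e2]
    apply coprime_of_no_common_prime
    intro p hp hpZ hpM'
    exact hZpi p hp hpZ (hMpi p hp hpM')
  obtain ⟨C, hC⟩ := Subgroup.exists_right_complement'_of_coprime hcop
  have hZ'pos : 0 < Nat.card Z' := Nat.card_pos
  have hcardC : Nat.card C = Z'.index :=
    Nat.eq_of_mul_eq_mul_left hZ'pos (hC.card_mul.trans Z'.card_mul_index.symm)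
  set C' := C.map M.subtype with hC'def
  have hC'le : C' ≤ M := Subgroup.map_subtype_le C
  have ecard : Nat.card C' = Nat.card M' := by
    rw [hC'def, ← e2, ← hcardC]
    exact Nat.card_congr (Subgroup.equivMapOfInjective C M.subtype M.subtype_injective).toEquiv.symm
  -- conjugates of C' are Z-conjugates
  have hnorm : ∀ g : G, ∃ z ∈ Z,
      C'.map (MulAut.conj g).toMonoidHom = C'.map (MulAut.conj z).toMonoidHom := by
    intro g
    set K2 := C'.map (MulAut.conj g).toMonoidHom with hK2
    have hK2le : K2 ≤ M := by
      rintro x ⟨y, hy, rfl⟩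
      simpa [MulAut.conj_apply] using hMnormal.conj_mem y (hC'le hy) g
    have hK2card : Nat.card (K2.subgroupOf M) = Nat.card C := by
      have a1 : Nat.card (K2.subgroupOf M) = Nat.card K2 :=
        Nat.card_congr (Subgroup.subgroupOfEquivOfLe hK2le).toEquiv
      have a2 : Nat.card K2 = Nat.card C' :=
        (Nat.card_congr (Subgroup.equivMapOfInjective C' _
          (MulAut.conj g).injective).toEquiv).symm
      have a3 : Nat.card C' = Nat.card C :=
        (Nat.card_congr (Subgroup.equivMapOfInjective C M.subtype
          M.subtype_injective).toEquiv).symm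
      rw [a1, a2, a3]
    have hcomp2 : IsComplement' Z' (K2.subgroupOf M) := by
      apply Subgroup.isComplement'_of_coprime
      · rw [hK2card]; exact hC.card_mul
      · rw [hK2card, hcardC]; exact hcop
    obtain ⟨z, hz, hzeq⟩ := sz_conj Z' hC hcomp2 hcop
    refine ⟨(z : G), (Subgroup.mem_subgroupOf.mp hz : (z : G) ∈ Z), ?_⟩
    have hback : K2 = (K2.subgroupOf M).map M.subtype := by
      rw [Subgroup.subgroupOf_map_subtype, inf_eq_left.mpr hK2le]
    rw [hback, hzeq, Subgroup.map_map, hC'def, Subgroup.map_map]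
    congr 1
  have hnormalizer : Subgroup.normalizer (C' : Set G) ⊔ frattini G = ⊤ := by
    rw [eq_top_iff]
    intro g _
    obtain ⟨z, hz, hzeq⟩ := hnorm g
    have hmem : z⁻¹ * g ∈ Subgroup.normalizer (C' : Set G) := by
      rw [Subgroup.mem_normalizer_iff]
      intro x
      constructor
      · intro hx
        have h1 : g * x * g⁻¹ ∈ C'.map (MulAut.conj z).toMonoidHom := by
          rw [← hzeq]; exact ⟨x, hx, rfl⟩
        obtain ⟨y, hy, hyeq⟩ := h1
        have hyy : z * y * z⁻¹ = g * x * g⁻¹ := hyeq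
        have hy2 : z⁻¹ * (g * x * g⁻¹) * z = y := by rw [← hyy]; group
        have hre : (z⁻¹ * g) * x * (z⁻¹ * g)⁻¹ = z⁻¹ * (g * x * g⁻¹) * z := by group
        rw [hre, hy2]; exact hy
      · intro hx
        have h1 : g * x * g⁻¹ ∈ C'.map (MulAut.conj g).toMonoidHom := by
          rw [hzeq]
          refine ⟨(z⁻¹ * g) * x * (z⁻¹ * g)⁻¹, hx, ?_⟩
          show z * ((z⁻¹ * g) * x * (z⁻¹ * g)⁻¹) * z⁻¹ = g * x * g⁻¹
          group
        obtain ⟨y, hy, hyeq⟩ := h1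
        have : x = y := by
          have h2 : g * y * g⁻¹ = g * x * g⁻¹ := hyeq
          have := mul_left_cancel (mul_right_cancel h2)
          exact this.symm
        rw [this]; exact hy
    have : g = z * (z⁻¹ * g) := by group
    rw [this, sup_comm]
    exact Subgroup.mul_mem_sup (hZle hz) hmem
  have hCnormal : C'.Normal := Subgroup.normalizer_eq_top_iff.mp
    (frattini_nongenerating hnormalizer)
  have hCbot : C' = ⊥ := by
    apply h C' hCnormal
    intro p hp hpd
    rw [ecard] at hpd
    exact hMpi p hp hpd
  have : Nat.card M' = 1 := by
    rw [← ecard, hCbot]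
    simp
  exact Subgroup.card_eq_one.mp this


lemma map_center_isCommutative (N : Subgroup G) :
    IsMulCommutative ((Subgroup.center N).map N.subtype) := by
  constructor; constructor
  rintro ⟨a, ha⟩ ⟨b, hb⟩
  obtain ⟨x, hx, rfl⟩ := ha
  obtain ⟨y, hy, rfl⟩ := hb
  apply Subtype.ext
  show (↑x : G) * ↑y = ↑y * ↑x
  have h2 : y * x = x * y := Subgroup.mem_center_iff.mp hx y
  exact (congrArg Subtype.val h2).symm

/-- Every Sylow subgroup of the Frattini subgroup, mapped into `G`, is normal in `G`. -/
lemma sylow_frattini_normal [Finite G] {p : ℕ} [Fact p.Prime] (P : Sylow p (frattini G)) :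
    ((P : Subgroup (frattini G)).map (frattini G).subtype).Normal := by
  have fr := Sylow.normalizer_sup_eq_top P
  have := frattini_nongenerating fr
  exact Subgroup.normalizer_eq_top_iff.mp this

lemma dvd_card_sylow [Finite G] {p : ℕ} [hp : Fact p.Prime] (P : Sylow p G)
    (hdvd : p ∣ Nat.card G) : p ∣ Nat.card (P : Subgroup G) := by
  rw [Sylow.card_eq_multiplicity]
  refine dvd_pow_self p ?_
  exact (hp.out.factorization_pos_of_dvd Nat.card_pos.ne' hdvd).ne'

/-- No prime of `π` divides the order of the Frattini subgroup. -/
lemma frattini_pi' [Finite G] (π : Set ℕ)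
    (h : ∀ H : Subgroup G, H.Normal → (∀ p, p.Prime → p ∣ Nat.card H → p ∈ π) → H = ⊥) :
    ∀ p : ℕ, p.Prime → p ∣ Nat.card (frattini G) → p ∉ π := by
  intro p hp hdvd hpi
  haveI : Fact p.Prime := ⟨hp⟩
  obtain ⟨P⟩ : Nonempty (Sylow p (frattini G)) := inferInstance
  set P' := (P : Subgroup (frattini G)).map (frattini G).subtype with hP'
  haveI hPnormal : P'.Normal := sylow_frattini_normal P
  have hPp : IsPGroup p P' := P.2.map _
  have hPbot : P' = ⊥ := by
    apply h P' hPnormal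
    intro q hq hqd
    obtain ⟨n, hn⟩ := IsPGroup.iff_card.mp hPp
    rw [hn] at hqd
    have : q = p := (Nat.prime_dvd_prime_iff_eq hq hp).mp (hq.dvd_of_dvd_pow hqd)
    rwa [this]
  have hcard : p ∣ Nat.card (P : Subgroup (frattini G)) := dvd_card_sylow P hdvd
  have : Nat.card P' = Nat.card (P : Subgroup (frattini G)) :=
    (Nat.card_congr (Subgroup.equivMapOfInjective (P : Subgroup (frattini G))
      (frattini G).subtype (subtype_injective _)).toEquiv).symm
  rw [hPbot] at this
  simp at this
  rw [← this] at hcard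
  exact Nat.Prime.one_lt hp |>.ne' (Nat.dvd_one.mp hcard)




lemma existsZ [Finite G] (π : Set ℕ)
    (h : ∀ H : Subgroup G, H.Normal → (∀ p, p.Prime → p ∣ Nat.card H → p ∈ π) → H = ⊥)
    (hnb : frattini G ≠ ⊥) :
    ∃ Z : Subgroup G, Z.Normal ∧ IsMulCommutative Z ∧ Z ≤ frattini G ∧ Z ≠ ⊥ ∧
      (∀ p, p.Prime → p ∣ Nat.card Z → p ∉ π) := by
  set q := (Nat.card (frattini G)).minFac with hqdef
  have hcard1 : Nat.card (frattini G) ≠ 1 := fun hc => hnb (Subgroup.card_eq_one.mp hc)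
  have hq : q.Prime := Nat.minFac_prime hcard1
  haveI : Fact q.Prime := ⟨hq⟩
  obtain ⟨P⟩ : Nonempty (Sylow q (frattini G)) := inferInstance
  set P' := map (frattini G).subtype (P : Subgroup (frattini G)) with hP'def
  haveI hP'normal : P'.Normal := sylow_frattini_normal P
  have hP'le : P' ≤ frattini G := Subgroup.map_subtype_le _
  have hqd : q ∣ Nat.card P' := by
    have h1 := dvd_card_sylow P (Nat.minFac_dvd _)
    have h2 : Nat.card P' = Nat.card (P : Subgroup (frattini G)) :=
      (Nat.card_congr (Subgroup.equivMapOfInjective (P : Subgroup (frattini G))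
        (frattini G).subtype (subtype_injective _)).toEquiv).symm
    rwa [← h2] at h1
  haveI : Nontrivial P' := by
    rw [← Finite.one_lt_card_iff_nontrivial]
    exact lt_of_lt_of_le hq.one_lt (Nat.le_of_dvd Nat.card_pos hqd)
  have hPp : IsPGroup q P' := P.2.map _
  haveI hcenter : Nontrivial (Subgroup.center P') := hPp.center_nontrivial
  refine ⟨(Subgroup.center P').map P'.subtype, charNormal _ _, map_center_isCommutative _,
    le_trans (Subgroup.map_subtype_le _) hP'le, ?_, ?_⟩
  · intro hbot
    have hbot2 : Subgroup.center P' = ⊥ := by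
      apply Subgroup.map_injective (subtype_injective P')
      rw [hbot, Subgroup.map_bot]
    have : (1 : ℕ) < Nat.card (Subgroup.center P') := Finite.one_lt_card_iff_nontrivial.mpr hcenter
    rw [hbot2] at this
    simp at this
  · intro p hp hpd
    exact frattini_pi' π h p hp
      (hpd.trans (Subgroup.card_dvd_of_le (le_trans (Subgroup.map_subtype_le _) hP'le)))


lemma coatom_map (N : Subgroup G) [N.Normal] {M : Subgroup G}
    (hM : IsCoatom M) (hNM : N ≤ M) :
    IsCoatom (M.map (QuotientGroup.mk' N)) := by
  have hsurj : Function.Surjective (QuotientGroup.mk' N) := QuotientGroup.mk'_surjective N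
  have hcm : comap (QuotientGroup.mk' N) (map (QuotientGroup.mk' N) M) = M := by
    rw [Subgroup.comap_map_eq, QuotientGroup.ker_mk', sup_eq_left.mpr hNM]
  constructor
  · intro htop
    rw [htop, Subgroup.comap_top] at hcm
    exact hM.1 hcm.symm
  · intro X hX
    have h1 : M < comap (QuotientGroup.mk' N) X := by
      rw [← hcm]
      refine lt_of_le_of_ne (comap_mono hX.le) ?_
      intro heq
      have := Subgroup.map_comap_eq_self_of_surjective hsurj X
      rw [← this, ← heq, hcm] at hX
      exact hX.ne rfl
    have h2 := hM.2 _ h1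
    have := Subgroup.map_comap_eq_self_of_surjective hsurj X
    rw [← this, h2]
    exact Subgroup.map_top_of_surjective _ hsurj

lemma comap_frattini_quotient_le [Finite G] (N : Subgroup G) [N.Normal]
    (hN : N ≤ frattini G) :
    comap (QuotientGroup.mk' N) (frattini (G ⧸ N)) ≤ frattini G := by
  have : frattini G = ⨅ M ∈ {H : Subgroup G | IsCoatom H}, M := rfl
  rw [this]
  refine le_iInf₂ fun M hM => ?_
  have hNM : N ≤ M := hN.trans (frattini_le_coatom hM)
  have hle := frattini_le_coatom (coatom_map N hM hNM)
  calc comap (QuotientGroup.mk' N) (frattini (G ⧸ N))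
      ≤ comap (QuotientGroup.mk' N) (map (QuotientGroup.mk' N) M) := comap_mono hle
    _ = M := by rw [Subgroup.comap_map_eq, QuotientGroup.ker_mk', sup_eq_left.mpr hNM]





theorem auxMain : ∀ (n : ℕ) (G : Type u) [Group G] [Finite G], Nat.card G ≤ n →
    ∀ (π : Set ℕ),
    (∀ H : Subgroup G, H.Normal → (∀ p, p.Prime → p ∣ Nat.card H → p ∈ π) → H = ⊥) →
    ∀ H : Subgroup (G ⧸ frattini G), H.Normal →
      (∀ p, p.Prime → p ∣ Nat.card H → p ∈ π) → H = ⊥ := by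
  intro n
  induction n with
  | zero =>
    intro G _ _ hcard
    have := Nat.card_pos (α := G)
    omega
  | succ n ih =>
    intro G _ _ hcard π h Hbar hHbar hHpi
    have hmksurj := QuotientGroup.mk'_surjective (frattini G)
    set mk := QuotientGroup.mk' (frattini G) with hmkdef
    set K := comap mk Hbar with hKdef
    haveI hKn : K.Normal := hHbar.comap mk
    have hmapK : map mk K = Hbar := Subgroup.map_comap_eq_self_of_surjective hmksurj Hbar
    by_cases hnb : frattini G = ⊥
    · have hinj : Function.Injective mk := by
        rw [← MonoidHom.ker_eq_bot_iff, hmkdef, QuotientGroup.ker_mk', hnb]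
      have hcardK : Nat.card K = Nat.card Hbar := by
        rw [← hmapK]
        exact Nat.card_congr (Subgroup.equivMapOfInjective K mk hinj).toEquiv
      have hKbot : K = ⊥ := h K hKn (fun p hp hpd => hHpi p hp (hcardK ▸ hpd))
      rw [← hmapK, hKbot, Subgroup.map_bot]
    · obtain ⟨Z, hZn, hZcomm, hZle, hZbot, hZpi⟩ := existsZ π h hnb
      haveI := hZn
      have hB := lemmaB π h Z hZcomm hZle hZpi
      have hZ2 : 2 ≤ Nat.card Z := by
        have h1 : Nat.card Z ≠ 1 := fun hc => hZbot (Subgroup.card_eq_one.mp hc)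
        have h2 : 0 < Nat.card Z := Nat.card_pos
        omega
      have hcardQ : Nat.card (G ⧸ Z) ≤ n := by
        have heq := Subgroup.card_eq_card_quotient_mul_card_subgroup Z
        have hq : 0 < Nat.card (G ⧸ Z) := Nat.card_pos
        nlinarith
      have hind := ih (G ⧸ Z) hcardQ π hB
      set p1 := QuotientGroup.mk' Z with hp1def
      set p2 := QuotientGroup.mk' (frattini (G ⧸ Z)) with hp2def
      set ψ := p2.comp p1 with hψdef
      have hψsurj : Function.Surjective ψ :=
        (QuotientGroup.mk'_surjective (frattini (G ⧸ Z))).comp (QuotientGroup.mk'_surjective Z)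
      have hkerψ : ψ.ker = comap p1 (frattini (G ⧸ Z)) := by
        rw [hψdef, ← MonoidHom.comap_ker, hp2def, QuotientGroup.ker_mk']
      have hfkerψ : frattini G ≤ ψ.ker := by
        rw [hkerψ]
        exact frattini_le_comap_frattini_of_surjective (QuotientGroup.mk'_surjective Z)
      set χ := QuotientGroup.lift (frattini G) ψ hfkerψ with hχdef
      have hχmk : χ.comp mk = ψ := by
        ext x
        rfl
      set L := map χ Hbar with hLdef
      have hLval : L = map ψ K := by
        rw [hLdef, ← hmapK, Subgroup.map_map, hχmk]
      haveI hLn : L.Normal := by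
        rw [hLval]
        exact hKn.map ψ hψsurj
      have hLpi : ∀ p, p.Prime → p ∣ Nat.card L → p ∈ π := by
        intro p hp hpd
        have hdvd : Nat.card L ∣ Nat.card Hbar :=
          Subgroup.card_dvd_of_surjective (χ.subgroupMap Hbar) (χ.subgroupMap_surjective Hbar)
        exact hHpi p hp (hpd.trans hdvd)
      have hLbot : L = ⊥ := hind L hLn hLpi
      have hKle : K ≤ ψ.ker := by
        rw [← Subgroup.map_eq_bot_iff, ← hLval]
        exact hLbot
      have hKfr : K ≤ frattini G := by
        refine le_trans (hKle.trans (le_of_eq hkerψ)) ?_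
        exact comap_frattini_quotient_le Z hZle
      rw [← hmapK, Subgroup.map_eq_bot_iff, hmkdef, QuotientGroup.ker_mk']
      exact hKfr



end FrattiniPiCore

/-- Lemma 3.6: if `G` is a finite group and `π` a set of primes with `O_π(G) = 1`
(i.e. every normal `π`-subgroup of `G` is trivial), then `O_π(G/Φ(G)) = 1`. -/
theorem stmt_7 {G : Type*} [Group G] [Finite G] (π : Set ℕ)
    (h : ∀ H : Subgroup G, H.Normal →
        (∀ p : ℕ, p.Prime → p ∣ Nat.card H → p ∈ π) → H = ⊥) :
    ∀ H : Subgroup (G ⧸ frattini G), H.Normal →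
        (∀ p : ℕ, p.Prime → p ∣ Nat.card H → p ∈ π) → H = ⊥ :=
  auxMain (Nat.card G) G le_rfl π h
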